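/- Let (G, k) be a yes-instance of the diamond-free editing problem and let (E+, E−) be a solution of (G, k). If uv is a non-edge of G and there exist k+1 pairwise nonadjacent vertices in N(u) ∩ N(v), then uv ∉ E+. -/

import Mathlib

variable {V : Type*}

/-- An induced diamond on vertices `u v x y`: all five edges present except `xy`;
`uv` is the cross edge and `xy` the missing edge. -/
def IsDiamond (G : SimpleGraph V) (u v x y : V) : Prop :=
  u ≠ v ∧ u ≠ x ∧ u ≠ y ∧ v ≠ x ∧ v ≠ y ∧ x ≠ y ∧
  G.Adj u v ∧ G.Adj u x ∧ G.Adj u y ∧ G.Adj v x ∧ G.Adj v y ∧ ¬ G.Adj x y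

def DiamondFree (G : SimpleGraph V) : Prop :=
  ∀ u v x y : V, ¬ IsDiamond G u v x y

/-- The graph `G △ E±` obtained from `G` by adding the edges of `Ep` and
deleting the edges of `Em`. -/
def EditedGraph (G : SimpleGraph V) (Ep Em : Finset (Sym2 V)) : SimpleGraph V :=
  SimpleGraph.fromEdgeSet ((G.edgeSet ∪ ↑Ep) \ ↑Em)

/-- `(Ep, Em)` is a solution of the instance `(G, k)` of diamond-free editing:
`Ep` is a set of non-edges of `G`, `Em` a set of edges of `G`,
`|Ep| + |Em| ≤ k`, and the edited graph is diamond-free. -/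
def IsSolution (G : SimpleGraph V) (k : ℕ) (Ep Em : Finset (Sym2 V)) : Prop :=
  (∀ e ∈ Ep, e ∉ G.edgeSet ∧ ¬ e.IsDiag) ∧
  (∀ e ∈ Em, e ∈ G.edgeSet) ∧
  Ep.card + Em.card ≤ k ∧
  DiamondFree (EditedGraph G Ep Em)

def YesInstance (G : SimpleGraph V) (k : ℕ) : Prop :=
  ∃ Ep Em : Finset (Sym2 V), IsSolution G k Ep Em

/-- A minimum solution: a solution such that no valid edit set of strictly
smaller total size makes the graph diamond-free. -/
def IsMinSolution (G : SimpleGraph V) (k : ℕ) (Ep Em : Finset (Sym2 V)) : Prop :=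
  IsSolution G k Ep Em ∧
  ∀ Ep' Em' : Finset (Sym2 V),
    (∀ e ∈ Ep', e ∉ G.edgeSet ∧ ¬ e.IsDiag) →
    (∀ e ∈ Em', e ∈ G.edgeSet) →
    DiamondFree (EditedGraph G Ep' Em') →
    Ep.card + Em.card ≤ Ep'.card + Em'.card

/-- There are `2k+2` distinct vertices `x 0, y 0, …, x k, y k` in
`N(u) ∩ N(v)` with each `x i y i` an edge of `G`. -/
def EdgePairedWitness (G : SimpleGraph V) (k : ℕ) (u v : V) : Prop :=
  ∃ x y : Fin (k + 1) → V,
    Function.Injective (Sum.elim x y) ∧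
    (∀ i, G.Adj u (x i) ∧ G.Adj v (x i) ∧ G.Adj u (y i) ∧ G.Adj v (y i)) ∧
    (∀ i, G.Adj (x i) (y i))

/-- There are `2k+2` distinct vertices `x 0, y 0, …, x k, y k` in
`N(u) ∩ N(v)` with each `x i y i` a non-edge of `G`. -/
def NonEdgePairedWitness (G : SimpleGraph V) (k : ℕ) (u v : V) : Prop :=
  ∃ x y : Fin (k + 1) → V,
    Function.Injective (Sum.elim x y) ∧
    (∀ i, G.Adj u (x i) ∧ G.Adj v (x i) ∧ G.Adj u (y i) ∧ G.Adj v (y i)) ∧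
    (∀ i, ¬ G.Adj (x i) (y i))

/-- The instance `(G, k)` is reduced: neither sunflower rule applies. -/
def Reduced (G : SimpleGraph V) (k : ℕ) : Prop :=
  (∀ u v : V, u ≠ v → ¬ G.Adj u v → ¬ EdgePairedWitness G k u v) ∧
  (∀ u v : V, G.Adj u v → ¬ NonEdgePairedWitness G k u v)

/-- `K` is a maximal clique of `G`. -/
def IsMaxClique (G : SimpleGraph V) (K : Finset V) : Prop :=
  G.IsClique (↑K : Set V) ∧
  ∀ K' : Finset V, G.IsClique (↑K' : Set V) → K ⊆ K' → K = K'

/-- `K` is a type-I maximal clique: it shares at least two vertices with some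
other maximal clique. -/
def TypeI [DecidableEq V] (G : SimpleGraph V) (K : Finset V) : Prop :=
  IsMaxClique G K ∧
  ∃ K' : Finset V, IsMaxClique G K' ∧ K' ≠ K ∧ 2 ≤ (K ∩ K').card

/-- `K` is a type-II maximal clique: it shares at most one vertex with every
other maximal clique. -/
def TypeII [DecidableEq V] (G : SimpleGraph V) (K : Finset V) : Prop :=
  IsMaxClique G K ∧
  ∀ K' : Finset V, IsMaxClique G K' → K' ≠ K → (K ∩ K').card ≤ 1

/-- A small (fewer than `3k+2` vertices) type-I maximal clique. -/
def SmallTypeI [DecidableEq V] (G : SimpleGraph V) (k : ℕ) (K : Finset V) : Prop :=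
  TypeI G K ∧ K.card < 3 * k + 2

/-- `S(G)`: the union of all small type-I maximal cliques of `G`. -/
def SG [DecidableEq V] (G : SimpleGraph V) (k : ℕ) : Set V :=
  {v | ∃ K : Finset V, SmallTypeI G k K ∧ v ∈ K}

/-- A vulnerable vertex: it is in a small type-I maximal clique, or in a
type-II maximal clique intersecting a small type-I maximal clique. -/
def Vulnerable [DecidableEq V] (G : SimpleGraph V) (k : ℕ) (v : V) : Prop :=
  (∃ K : Finset V, SmallTypeI G k K ∧ v ∈ K) ∨
  (∃ K1 K2 : Finset V, SmallTypeI G k K1 ∧ TypeII G K2 ∧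
    (K1 ∩ K2).Nonempty ∧ v ∈ K2)

/-- if `uv` is a non-edge of `G` and there are `k+1` pairwise
nonadjacent vertices in `N(u) ∩ N(v)`, then `uv ∉ E+` for any solution. -/
theorem stmt1 [Fintype V] [DecidableEq V] (G : SimpleGraph V) (k : ℕ)
    (hyes : YesInstance G k) (Ep Em : Finset (Sym2 V)) (hsol : IsSolution G k Ep Em)
    (u v : V) (hne : u ≠ v) (hnadj : ¬ G.Adj u v)
    (T : Finset V) (hTcard : T.card = k + 1)
    (hTsub : (↑T : Set V) ⊆ G.neighborSet u ∩ G.neighborSet v)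
    (hTindep : ∀ a ∈ T, ∀ b ∈ T, a ≠ b → ¬ G.Adj a b) :
    s(u, v) ∉ Ep := by
  classical
  intro hmem
  obtain ⟨hEp, hEm, hcard, hdf⟩ := hsol
  set H := EditedGraph G Ep Em with hH
  have hadjH : ∀ a b : V, H.Adj a b ↔
      (s(a,b) ∈ G.edgeSet ∨ s(a,b) ∈ Ep) ∧ s(a,b) ∉ Em ∧ a ≠ b := by
    intro a b
    simp only [hH, EditedGraph, SimpleGraph.fromEdgeSet_adj, Set.mem_diff,
      Set.mem_union, SimpleGraph.mem_edgeSet, Finset.mem_coe]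
    have := @SimpleGraph.Adj.ne _ G a b
    tauto
  have htu : ∀ t ∈ T, G.Adj u t := fun t ht => (hTsub ht).1
  have htv : ∀ t ∈ T, G.Adj v t := fun t ht => (hTsub ht).2
  have htnu : ∀ t ∈ T, t ≠ u := fun t ht h => G.loopless.irrefl u (h ▸ htu t ht)
  have htnv : ∀ t ∈ T, t ≠ v := fun t ht h => G.loopless.irrefl v (h ▸ htv t ht)
  have huvEm : s(u,v) ∉ Em := fun h => hnadj (G.mem_edgeSet.mp (hEm _ h))
  have huvH : H.Adj u v := (hadjH u v).mpr ⟨Or.inr hmem, huvEm, hne⟩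
  set S : Finset V := T.filter (fun t => H.Adj u t ∧ H.Adj v t) with hSdef
  have hSsub : S ⊆ T := Finset.filter_subset _ _
  -- Step A: each t ∈ T \ S yields a distinct edge of Em
  have hEmLB : (T \ S).card ≤ Em.card := by
    apply Finset.card_le_card_of_injOn
      (fun t => if s(u,t) ∈ Em then s(u,t) else s(v,t))
    · intro t ht
      rw [Finset.mem_coe, Finset.mem_sdiff] at ht
      obtain ⟨htT, htS⟩ := ht
      by_cases h1 : s(u,t) ∈ Em
      · simp [h1]
      · have hHu : H.Adj u t := (hadjH u t).mpr
          ⟨Or.inl (G.mem_edgeSet.mpr (htu t htT)), h1, (htu t htT).ne⟩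
        have h2 : s(v,t) ∈ Em := by
          by_contra h2
          exact htS (Finset.mem_filter.mpr ⟨htT, hHu, (hadjH v t).mpr
            ⟨Or.inl (G.mem_edgeSet.mpr (htv t htT)), h2, (htv t htT).ne⟩⟩)
        simpa [h1] using h2
    · intro a ha b hb hab
      simp only [Finset.mem_coe, Finset.mem_sdiff] at ha hb
      have haT := ha.1; have hbT := hb.1
      have h1 : (fun t => if s(u,t) ∈ Em then s(u,t) else s(v,t)) a = s(u,a) ∨
          (fun t => if s(u,t) ∈ Em then s(u,t) else s(v,t)) a = s(v,a) := by
        by_cases h : s(u,a) ∈ Em <;> simp [h]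
      have h2 : (fun t => if s(u,t) ∈ Em then s(u,t) else s(v,t)) b = s(u,b) ∨
          (fun t => if s(u,t) ∈ Em then s(u,t) else s(v,t)) b = s(v,b) := by
        by_cases h : s(u,b) ∈ Em <;> simp [h]
      rcases h1 with h1 | h1 <;> rcases h2 with h2 | h2 <;>
        rw [h1, h2] at hab <;> rw [Sym2.eq_iff] at hab <;>
        rcases hab with ⟨h3, h4⟩ | ⟨h3, h4⟩ <;>
          first
          | exact h4
          | exact absurd h3.symm (htnu b hbT)
          | exact absurd h3.symm (htnv b hbT)
          | exact absurd h4 (htnu a haT)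
          | exact absurd h4 (htnv a haT)
  -- vertices of S are pairwise H-adjacent
  have hSclique : ∀ a ∈ S, ∀ b ∈ S, a ≠ b → H.Adj a b := by
    intro a ha b hb hab
    rw [hSdef, Finset.mem_filter] at ha hb
    by_contra hnab
    exact hdf u v a b ⟨hne, (htu a ha.1).ne, (htu b hb.1).ne,
      (htv a ha.1).ne, (htv b hb.1).ne, hab,
      huvH, ha.2.1, hb.2.1, ha.2.2, hb.2.2, hnab⟩
  -- pairs within S give edges of Ep
  have hSEp : ∀ a ∈ S, ∀ b ∈ S, a ≠ b → s(a,b) ∈ Ep := by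
    intro a ha b hb hab
    have := (hadjH a b).mp (hSclique a ha b hb hab)
    rcases this.1 with h | h
    · exact absurd (G.mem_edgeSet.mp h)
        (hTindep a (hSsub ha) b (hSsub hb) hab)
    · exact h
  have hEp1 : 1 ≤ Ep.card := Finset.card_pos.mpr ⟨_, hmem⟩
  have hEpLB : S.card ≤ Ep.card := by
    rcases Finset.eq_empty_or_nonempty S with hS | ⟨t0, ht0⟩
    · simp [hS]
    · have h1 : (S.erase t0).card ≤ (Ep.erase s(u,v)).card := by
        apply Finset.card_le_card_of_injOn (fun t => s(t0, t))
        · intro t ht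
          rw [Finset.mem_coe, Finset.mem_erase] at ht
          refine Finset.mem_erase.mpr ⟨?_, hSEp t0 ht0 t ht.2 (Ne.symm ht.1)⟩
          rw [Ne, Sym2.eq_iff]
          rintro (⟨h3, h4⟩ | ⟨h3, h4⟩)
          · exact htnu t0 (hSsub ht0) h3
          · exact htnv t0 (hSsub ht0) h3
        · intro a ha b hb hab
          simp only at hab
          rw [Sym2.eq_iff] at hab
          rcases hab with ⟨h3, h4⟩ | ⟨h3, h4⟩
          · exact h4
          · exact absurd h4 (Finset.mem_erase.mp (Finset.mem_coe.mp ha)).1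
      rw [Finset.card_erase_of_mem ht0, Finset.card_erase_of_mem hmem] at h1
      omega
  have hTsplit : (T \ S).card = T.card - S.card := Finset.card_sdiff_of_subset hSsub
  have hScard : S.card ≤ T.card := Finset.card_le_card hSsub
  omega
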